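/- Let D be a digraph obtained from a tournament by deleting the edges of a single star. Then D has a vertex with the second neighborhood property. -/

import Mathlib

variable {V : Type*}

/-- Out-neighborhood of `v`. -/
def Nplus (A : V → V → Prop) (v : V) : Set V := {u | A v u}

/-- In-neighborhood of `v`. -/
def Nminus (A : V → V → Prop) (v : V) : Set V := {u | A u v}

/-- Second out-neighborhood: vertices at directed distance exactly 2 from `v`. -/
def Npp (A : V → V → Prop) (v : V) : Set V :=
  {u | u ≠ v ∧ ¬ A v u ∧ ∃ w, A v w ∧ A w u}

/-- The second neighborhood property. -/
def SNP (A : V → V → Prop) (v : V) : Prop := (Nplus A v).ncard ≤ (Npp A v).ncard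

/-- A digraph (given by its arc relation) has no digons: no 2-cycles (this also rules out loops when stated for `u = v`). -/
def NoDigons (A : V → V → Prop) : Prop := ∀ u v, ¬ (A u v ∧ A v u)

/-- A tournament: an orientation of a complete graph. -/
def IsTournament (A : V → V → Prop) : Prop :=
  (∀ v, ¬ A v v) ∧ ∀ u v : V, u ≠ v → (A u v ↔ ¬ A v u)

/-- `u v` is a missing edge: distinct and non-adjacent. -/
def MissingEdge (A : V → V → Prop) (u v : V) : Prop := u ≠ v ∧ ¬ A u v ∧ ¬ A v u

/-- `x₁y₁` loses to `x₂y₂` (with this labelling of endpoints). -/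
def LosesAt (A : V → V → Prop) (x₁ y₁ x₂ y₂ : V) : Prop :=
  A x₁ x₂ ∧ ¬ A x₁ y₂ ∧ y₂ ∉ Npp A x₁ ∧ A y₁ y₂ ∧ ¬ A y₁ x₂ ∧ x₂ ∉ Npp A y₁

/-- The losing relation between (unordered) missing edges: the arcs of the dependency digraph. -/
def EdgeLoses (A : V → V → Prop) (e e' : Sym2 V) : Prop :=
  ∃ x₁ y₁ x₂ y₂, e = s(x₁, y₁) ∧ e' = s(x₂, y₂) ∧
    MissingEdge A x₁ y₁ ∧ MissingEdge A x₂ y₂ ∧ LosesAt A x₁ y₁ x₂ y₂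
open Classical

/-- count of elements of a list satisfying `P` -/
noncomputable def cnt (P : V → Prop) : List V → ℕ
  | [] => 0
  | a :: t => (if P a then 1 else 0) + cnt P t

lemma cnt_nil (P : V → Prop) : cnt P ([] : List V) = 0 := rfl

lemma cnt_cons (P : V → Prop) (a : V) (t : List V) :
    cnt P (a :: t) = (if P a then 1 else 0) + cnt P t := rfl

lemma cnt_append (P : V → Prop) (l₁ l₂ : List V) :
    cnt P (l₁ ++ l₂) = cnt P l₁ + cnt P l₂ := by
  induction l₁ with
  | nil => simp [cnt]
  | cons a t ih => simp only [List.cons_append, cnt_cons, ih]; omega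

lemma cnt_perm {l₁ l₂ : List V} (h : l₁.Perm l₂) (P : V → Prop) :
    cnt P l₁ = cnt P l₂ := by
  induction h with
  | nil => rfl
  | cons a _ ih => simp [cnt_cons, ih]
  | swap a b t => simp [cnt_cons]; omega
  | trans _ _ ih₁ ih₂ => omega

lemma cnt_mono_imp {P Q : V → Prop} {l : List V} (h : ∀ a ∈ l, P a → Q a) :
    cnt P l ≤ cnt Q l := by
  induction l with
  | nil => simp [cnt]
  | cons a t ih =>
    have h1 := h a (by simp)
    have h2 : cnt P t ≤ cnt Q t := ih (fun b hb => h b (by simp [hb]))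
    simp only [cnt_cons]
    by_cases hp : P a
    · simp [hp, h1 hp]; omega
    · simp [hp]; omega

lemma cnt_split_or {P Q R : V → Prop} {l : List V} (h : ∀ a ∈ l, P a → Q a ∨ R a) :
    cnt P l ≤ cnt Q l + cnt R l := by
  induction l with
  | nil => simp [cnt]
  | cons a t ih =>
    have h2 : cnt P t ≤ cnt Q t + cnt R t := ih (fun b hb => h b (by simp [hb]))
    simp only [cnt_cons]
    by_cases hp : P a
    · rcases h a (by simp) hp with hq | hr
      · simp [hp, hq]; omega
      · simp [hp, hr]; omega
    · simp [hp]; omega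

lemma cnt_congr {P Q : V → Prop} {l : List V} (h : ∀ a ∈ l, P a ↔ Q a) :
    cnt P l = cnt Q l :=
  le_antisymm (cnt_mono_imp fun a ha hp => (h a ha).1 hp)
    (cnt_mono_imp fun a ha hq => (h a ha).2 hq)

lemma cnt_eq_zero {P : V → Prop} {l : List V} (h : ∀ a ∈ l, ¬ P a) :
    cnt P l = 0 := by
  induction l with
  | nil => rfl
  | cons a t ih =>
    simp only [cnt_cons, ih (fun b hb => h b (by simp [hb]))]
    simp [h a (by simp)]

lemma cnt_single {c : V} {P : V → Prop} {l : List V} (hnd : l.Nodup) :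
    cnt (fun w => w = c ∧ P w) l ≤ 1 := by
  induction l with
  | nil => simp [cnt]
  | cons a t ih =>
    have hnd' : t.Nodup := hnd.of_cons
    simp only [cnt_cons]
    by_cases hp : a = c ∧ P a
    · have h0 : cnt (fun w => w = c ∧ P w) t = 0 := by
        apply cnt_eq_zero
        intro b hb hbc
        have hab : a = b := hp.1.trans hbc.1.symm
        exact (List.nodup_cons.mp hnd).1 (hab ▸ hb)
      rw [h0, if_pos hp]
    · simp [hp]; exact ih hnd'

lemma cnt_single_pair {c : V} {P Q : V → Prop} {l : List V} (hnd : l.Nodup)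
    (hx : ¬ (P c ∧ Q c)) :
    cnt (fun w => w = c ∧ P w) l + cnt (fun w => w = c ∧ Q w) l ≤ 1 := by
  by_cases hp : P c
  · have h0 : cnt (fun w => w = c ∧ Q w) l = 0 := by
      apply cnt_eq_zero; rintro b hb ⟨rfl, hq⟩; exact hx ⟨hp, hq⟩
    have := cnt_single (c := c) (P := P) hnd
    omega
  · have h0 : cnt (fun w => w = c ∧ P w) l = 0 := by
      apply cnt_eq_zero; rintro b hb ⟨rfl, hq⟩; exact hp hq
    have := cnt_single (c := c) (P := Q) hnd
    omega

/-- number of arcs from `u` into the list -/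
noncomputable def outw (A : V → V → Prop) (u : V) (l : List V) : ℕ := cnt (fun b => A u b) l

/-- number of arcs from the list to `u` -/
noncomputable def inw (A : V → V → Prop) (u : V) (l : List V) : ℕ := cnt (fun b => A b u) l

/-- number of forward arcs of an ordering -/
noncomputable def fwd (A : V → V → Prop) : List V → ℕ
  | [] => 0
  | a :: t => outw A a t + fwd A t

/-- number of arcs from `l₁` to `l₂` -/
noncomputable def cross (A : V → V → Prop) : List V → List V → ℕ
  | [], _ => 0
  | a :: t, l₂ => outw A a l₂ + cross A t l₂

lemma outw_append (A : V → V → Prop) (u : V) (l₁ l₂ : List V) :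
    outw A u (l₁ ++ l₂) = outw A u l₁ + outw A u l₂ := cnt_append _ _ _

lemma fwd_append (A : V → V → Prop) (l₁ l₂ : List V) :
    fwd A (l₁ ++ l₂) = fwd A l₁ + cross A l₁ l₂ + fwd A l₂ := by
  induction l₁ with
  | nil => simp [fwd, cross]
  | cons a t ih =>
    show outw A a (t ++ l₂) + fwd A (t ++ l₂)
      = (outw A a t + fwd A t) + (outw A a l₂ + cross A t l₂) + fwd A l₂
    rw [outw_append, ih]; omega

lemma cross_nil_right (A : V → V → Prop) (l : List V) : cross A l [] = 0 := by
  induction l with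
  | nil => rfl
  | cons a t ih => simp [cross, ih, outw, cnt]

lemma cross_cons_right (A : V → V → Prop) (l₁ : List V) (u : V) (l₂ : List V) :
    cross A l₁ (u :: l₂) = inw A u l₁ + cross A l₁ l₂ := by
  induction l₁ with
  | nil => simp [cross, inw, cnt]
  | cons a t ih =>
    simp only [cross, ih, outw, inw, cnt_cons]
    omega

lemma cross_perm_right (A : V → V → Prop) (l₁ : List V) {l₂ l₂' : List V}
    (h : l₂.Perm l₂') : cross A l₁ l₂ = cross A l₁ l₂' := by
  induction l₁ with
  | nil => rfl
  | cons a t ih => simp only [cross, ih, outw, cnt_perm h]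

/-- a median order: an ordering maximizing the number of forward arcs -/
def IsMedian (A : V → V → Prop) (l : List V) : Prop :=
  ∀ l', l'.Perm l → fwd A l' ≤ fwd A l

lemma median_suffix {A : V → V → Prop} {q s : List V} (h : IsMedian A (q ++ s)) :
    IsMedian A s := by
  intro s' hs'
  have h2 := h (q ++ s') ((hs'.append_left q))
  rw [fwd_append, fwd_append, cross_perm_right A q hs'] at h2
  omega


lemma fwd_middle_eq (A : V → V → Prop) (p : List V) (u : V) (s : List V) :
    fwd A (p ++ u :: s) + outw A u p = fwd A (u :: (p ++ s)) + inw A u p := by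
  have h1 : fwd A (p ++ u :: s) = fwd A p + (inw A u p + cross A p s) + (outw A u s + fwd A s) := by
    rw [fwd_append, cross_cons_right]; rfl
  have h2 : fwd A (u :: (p ++ s)) = (outw A u p + outw A u s) + (fwd A p + cross A p s + fwd A s) := by
    show outw A u (p ++ s) + fwd A (p ++ s) = _
    rw [outw_append, fwd_append]
  omega

lemma median_front_ineq {A : V → V → Prop} {p : List V} {u : V} {s : List V}
    (h : IsMedian A (p ++ u :: s)) : outw A u p ≤ inw A u p := by
  have hp := h (u :: (p ++ s)) List.perm_middle.symm
  have he := fwd_middle_eq A p u s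
  omega

lemma median_front_move {A : V → V → Prop} {p : List V} {u : V} {s : List V}
    (h : IsMedian A (p ++ u :: s)) (he : outw A u p = inw A u p) :
    IsMedian A (u :: (p ++ s)) := by
  intro m hm
  have h1 := h m (hm.trans List.perm_middle.symm)
  have h2 := fwd_middle_eq A p u s
  omega

lemma median_glue {A : V → V → Prop} {q s s' : List V} (h : IsMedian A (q ++ s))
    (hperm : s'.Perm s) (hmed' : IsMedian A s') :
    IsMedian A (q ++ s') := by
  have hfe : fwd A s' = fwd A s := le_antisymm (median_suffix h s' hperm)
    (hmed' s hperm.symm)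
  intro m hm
  have h1 := h m (hm.trans ((hperm.append_left q)))
  have h2 : fwd A (q ++ s') = fwd A (q ++ s) := by
    rw [fwd_append, fwd_append, cross_perm_right A q hperm, hfe]
  omega

/-- position of `c` in a list -/
noncomputable def posIn (c : V) : List V → ℕ
  | [] => 0
  | a :: t => if a = c then 0 else posIn c t + 1

lemma posIn_append_left {c : V} {p : List V} (hc : c ∈ p) (q : List V) :
    posIn c (p ++ q) = posIn c p := by
  induction p with
  | nil => simp at hc
  | cons a t ih =>
    by_cases h : a = c
    · simp [posIn, h]
    · have : c ∈ t := by rcases List.mem_cons.mp hc with h' | h'; exact absurd h'.symm h; exact h'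
      simp [posIn, h, ih this]

lemma posIn_append_right {c : V} {p : List V} (hc : c ∉ p) (q : List V) :
    posIn c (p ++ q) = p.length + posIn c q := by
  induction p with
  | nil => simp [posIn]
  | cons a t ih =>
    have ha : a ≠ c := fun h => hc (by simp [h])
    have : c ∉ t := fun h => hc (by simp [h])
    simp [posIn, ha, ih this]; omega

lemma posIn_lt_length {c : V} {l : List V} (hc : c ∈ l) : posIn c l < l.length := by
  induction l with
  | nil => simp at hc
  | cons a t ih =>
    by_cases h : a = c
    · simp [posIn, h]
    · have : c ∈ t := by rcases List.mem_cons.mp hc with h' | h'; exact absurd h'.symm h; exact h'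
      simp [posIn, h, ih this]

lemma posIn_cons_ne {c a : V} (h : a ≠ c) (t : List V) :
    posIn c (a :: t) = posIn c t + 1 := by simp [posIn, h]

lemma posIn_cons_self (c : V) (t : List V) : posIn c (c :: t) = 0 := by simp [posIn]

lemma first_split {P : V → Prop} {l : List V} (h : ∃ w ∈ l, P w) :
    ∃ p₁ u p₂, l = p₁ ++ u :: p₂ ∧ P u ∧ ∀ w ∈ p₁, ¬ P w := by
  induction l with
  | nil => simp at h
  | cons a t ih =>
    by_cases hp : P a
    · exact ⟨[], a, t, by simp, hp, by simp⟩
    · have : ∃ w ∈ t, P w := by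
        obtain ⟨w, hw, hPw⟩ := h
        rcases List.mem_cons.mp hw with h' | h'
        · exact absurd (h' ▸ hPw) hp
        · exact ⟨w, h', hPw⟩
      obtain ⟨p₁, u, p₂, heq, hu, hall⟩ := ih this
      exact ⟨a :: p₁, u, p₂, by simp [heq], hu, by
        intro w hw
        rcases List.mem_cons.mp hw with h' | h'
        · exact h' ▸ hp
        · exact hall w h'⟩

/-- `w` is a second out-neighbour of `f` within the vertex set `l`. -/
def GoodP (A : V → V → Prop) (f : V) (l : List V) (w : V) : Prop :=
  w ≠ f ∧ ¬ A f w ∧ ∃ y ∈ l, A f y ∧ A y w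

/-- `w` is neither an out-neighbour nor a second out-neighbour of `f` (and `w ≠ f`). -/
def BadP (A : V → V → Prop) (f : V) (l : List V) (w : V) : Prop :=
  w ≠ f ∧ ¬ A f w ∧ ¬ GoodP A f l w

lemma goodP_mono {A : V → V → Prop} {f : V} {l₁ l₂ : List V}
    (h : ∀ y ∈ l₁, y ∈ l₂) {w : V} (hg : GoodP A f l₁ w) : GoodP A f l₂ w := by
  obtain ⟨h1, h2, y, hy, h3, h4⟩ := hg
  exact ⟨h1, h2, y, h y hy, h3, h4⟩

/-- The key dichotomy: the feed `f` of a median order of a digraph missing a star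
centred at `c` either has its second neighbourhood (within the order) at least as
large as its first, or the order can be improved to another median order in which
`c` sits strictly later. -/
theorem lemA {A : V → V → Prop} (hA : NoDigons A) (n : ℕ) :
    ∀ (l p : List V) (f c : V), l.length ≤ n → l.Nodup → IsMedian A l →
      l = p ++ [f] → c ∈ l →
      (∀ u v, u ∈ l → v ∈ l → MissingEdge A u v → u = c ∨ v = c) →
      (cnt (fun w => A f w) l ≤ cnt (GoodP A f l) l)
      ∨ (∃ l', l'.Perm l ∧ IsMedian A l' ∧ posIn c l < posIn c l') := by
  induction n with
  | zero =>
    intro l p f c hlen _ _ hsplit _ _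
    rw [hsplit] at hlen; simp at hlen
  | succ n ih =>
    intro l p f c hlen hnd hmed hsplit hc hstar
    have hff : ¬ A f f := fun h => hA f f ⟨h, h⟩
    have hfnp : f ∉ p := by
      have h2 := List.nodup_append'.mp (hsplit ▸ hnd)
      exact fun hf => h2.2.2 hf (by simp)
    have hcount : ∀ P : V → Prop, cnt P l = cnt P p + (if P f then 1 else 0) := by
      intro P; rw [hsplit, cnt_append, cnt_cons, cnt_nil]; omega
    by_cases hB : ∀ w ∈ p, ¬ BadP A f l w
    · -- no bad vertices at all
      left
      have h1 : outw A f p ≤ inw A f p :=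
        median_front_ineq (p := p) (u := f) (s := []) (hsplit ▸ hmed)
      have h2 : inw A f p ≤ cnt (GoodP A f l) p := by
        apply cnt_mono_imp
        intro w hw hAwf
        have hwf : w ≠ f := fun h => hfnp (h ▸ hw)
        have hnAfw : ¬ A f w := fun h => hA f w ⟨h, hAwf⟩
        by_contra hng
        exact hB w hw ⟨hwf, hnAfw, hng⟩
      have h3 : cnt (fun w => A f w) l = outw A f p := by
        rw [hcount]; simp [hff, outw]
      have h4 : cnt (GoodP A f l) p ≤ cnt (GoodP A f l) l := by
        rw [hcount]; omega
      omega
    · push_neg at hB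
      obtain ⟨wB, hwBp, hwBbad⟩ := hB
      by_cases hd : ∃ w ∈ p, BadP A f l w ∧ w ≠ c
      · -- there is a bad vertex different from the centre; take the first one
        obtain ⟨p₁, u, p₂, hpeq, ⟨hubad, hunec⟩, hp₁⟩ := first_split hd
        have hl2 : l = p₁ ++ u :: (p₂ ++ [f]) := by
          rw [hsplit, hpeq]; simp
        set s : List V := p₂ ++ [f] with hs
        have hmed' : IsMedian A (p₁ ++ u :: s) := hl2 ▸ hmed
        have hio : outw A u p₁ ≤ inw A u p₁ := median_front_ineq hmed'
        obtain ⟨hune, hnAfu, hnGoodu⟩ := hubad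
        have hmem_p₁ : ∀ w ∈ p₁, w ∈ l := by
          intro w hw; rw [hl2]; simp [hw]
        have hmem_s : ∀ w ∈ s, w ∈ l := by
          intro w hw; rw [hl2]; simp [hw]
        have hfp₁ : f ∉ p₁ := fun h => hfnp (by rw [hpeq]; simp [h])
        have key1 : ∀ w ∈ p₁, A w u → ¬ A f w := by
          intro w hw hAwu hAfw
          exact hnGoodu ⟨hune, hnAfu, w, hmem_p₁ w hw, hAfw, hAwu⟩
        have key2 : ∀ w ∈ p₁, A f w → w ≠ c → A u w := by
          intro w hw hAfw hwnec
          have hnAwu : ¬ A w u := fun h => key1 w hw h hAfw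
          have hneuw : u ≠ w := fun h => hnAfu (h ▸ hAfw)
          by_contra hnAuw
          rcases hstar u w (by rw [hl2]; simp) (hmem_p₁ w hw) ⟨hneuw, hnAuw, hnAwu⟩ with h | h
          · exact hunec h
          · exact hwnec h
        have hndl2 : (p₁ ++ u :: s).Nodup := hl2 ▸ hnd
        by_cases heq2 : outw A u p₁ = inw A u p₁
        · -- relocate `u` to the front, delete it, and use induction
          have hmedU : IsMedian A (u :: (p₁ ++ s)) := median_front_move hmed' heq2
          set tail : List V := p₁ ++ s with htail
          have hutperm : (u :: tail).Perm l := by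
            rw [hl2]; exact List.perm_middle.symm
          have hmedT : IsMedian A tail := median_suffix (q := [u]) hmedU
          have hndT : tail.Nodup := ((hutperm.nodup_iff).mpr hnd).of_cons
          have hlenT : tail.length ≤ n := by
            have h5 : (u :: tail).length = l.length := hutperm.length_eq
            simp only [List.length_cons] at h5
            omega
          have htsplit : tail = (p₁ ++ p₂) ++ [f] := by
            rw [htail, hs, List.append_assoc]
          have hct : c ∈ tail := by
            have : c ∈ u :: tail := hutperm.mem_iff.mpr hc
            rcases List.mem_cons.mp this with h | h
            · exact absurd h.symm hunec
            · exact h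
          have hmem_t : ∀ w ∈ tail, w ∈ l := by
            intro w hw
            exact hutperm.mem_iff.mp (by simp [hw])
          rcases ih tail (p₁ ++ p₂) f c hlenT hndT hmedT htsplit hct
              (fun u' v' hu' hv' hm => hstar u' v' (hmem_t u' hu') (hmem_t v' hv') hm)
            with haT | hbT
          · left
            have e1 : cnt (fun w => A f w) l = cnt (fun w => A f w) (u :: tail) :=
              (cnt_perm hutperm _).symm
            have e2 : cnt (fun w => A f w) (u :: tail) = cnt (fun w => A f w) tail := by
              rw [cnt_cons]; simp [hnAfu]
            have e3 : cnt (GoodP A f tail) tail ≤ cnt (GoodP A f l) tail :=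
              cnt_mono_imp (fun a ha hg => goodP_mono hmem_t hg)
            have e4 : cnt (GoodP A f l) tail ≤ cnt (GoodP A f l) l := by
              rw [← cnt_perm hutperm (GoodP A f l), cnt_cons]; omega
            omega
          · right
            obtain ⟨Λ, hΛp, hΛmed, hΛpos⟩ := hbT
            refine ⟨u :: Λ, (hΛp.cons u).trans hutperm, ?_, ?_⟩
            · exact median_glue (q := [u]) (s := tail) hmedU hΛp hΛmed
            · have h1 : posIn c (u :: Λ) = posIn c Λ + 1 :=
                posIn_cons_ne (fun h => hunec h) Λ
              by_cases hcp₁ : c ∈ p₁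
              · have e1 : posIn c l = posIn c p₁ := by
                  rw [hl2, posIn_append_left hcp₁]
                have e2 : posIn c tail = posIn c p₁ := by
                  rw [htail, posIn_append_left hcp₁]
                omega
              · have hcs' : c ∈ s := by
                  rcases List.mem_append.mp (htail ▸ hct) with h | h
                  · exact absurd h hcp₁
                  · exact h
                have e1 : posIn c l = p₁.length + (posIn c s + 1) := by
                  rw [hl2, posIn_append_right hcp₁, posIn_cons_ne (fun h => hunec h)]
                have e2 : posIn c tail = p₁.length + posIn c s := by
                  rw [htail, posIn_append_right hcp₁]
                omega
        · -- strict inequality at `u`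
          have hstrict : outw A u p₁ + 1 ≤ inw A u p₁ := by omega
          have hndp₁ : p₁.Nodup := (List.nodup_append.mp hndl2).1
          have in_le : inw A u p₁ ≤ cnt (GoodP A f l) p₁
              + cnt (fun w => w = c ∧ BadP A f l w) p₁ := by
            apply cnt_split_or
            intro w hw hAwu
            have hnAfw : ¬ A f w := key1 w hw hAwu
            have hwf : w ≠ f := fun h => hfp₁ (h ▸ hw)
            by_cases hg : GoodP A f l w
            · exact Or.inl hg
            · have hbad : BadP A f l w := ⟨hwf, hnAfw, hg⟩
              have : w = c := by
                by_contra hne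
                exact hp₁ w hw ⟨hbad, hne⟩
              exact Or.inr ⟨this, hbad⟩
          have out_ge : cnt (fun w => A f w ∧ w ≠ c) p₁ ≤ outw A u p₁ :=
            cnt_mono_imp (fun w hw ⟨h1, h2⟩ => key2 w hw h1 h2)
          have split_out : cnt (fun w => A f w) p₁ ≤ cnt (fun w => A f w ∧ w ≠ c) p₁
              + cnt (fun w => w = c ∧ A f w) p₁ := by
            apply cnt_split_or
            intro w _ hw
            by_cases h : w = c
            · exact Or.inr ⟨h, hw⟩
            · exact Or.inl ⟨hw, h⟩
          have pair : cnt (fun w => w = c ∧ BadP A f l w) p₁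
              + cnt (fun w => w = c ∧ A f w) p₁ ≤ 1 :=
            cnt_single_pair hndp₁ (fun ⟨hb, ho⟩ => hb.2.1 ho)
          have prefix_bd : cnt (fun w => A f w) p₁ ≤ cnt (GoodP A f l) p₁ := by omega
          -- the suffix
          have hmedS : IsMedian A s :=
            median_suffix (q := p₁ ++ [u]) (by rw [List.append_assoc]; simpa using hmed')
          have hndS : s.Nodup := (List.nodup_append.mp hndl2).2.1.of_cons
          have hlenS : s.length ≤ n := by
            have : l.length = p₁.length + 1 + s.length := by rw [hl2]; simp; omega
            omega
          have splitcnt : ∀ Q : V → Prop,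
              cnt Q l = cnt Q p₁ + ((if Q u then 1 else 0) + cnt Q s) := by
            intro Q
            conv_lhs => rw [hl2]
            rw [cnt_append, cnt_cons]
          have hcombine : cnt (fun w => A f w) s ≤ cnt (GoodP A f l) s →
              cnt (fun w => A f w) l ≤ cnt (GoodP A f l) l := by
            intro hsle
            have e1 := splitcnt (fun w => A f w)
            have e2 := splitcnt (GoodP A f l)
            rw [if_neg hnAfu] at e1
            omega
          by_cases hcs : c ∈ s
          · rcases ih s p₂ f c hlenS hndS hmedS hs hcs
                (fun u' v' hu' hv' hm => hstar u' v' (hmem_s u' hu') (hmem_s v' hv') hm)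
              with haS | hbS
            · left
              exact hcombine (le_trans haS (cnt_mono_imp (fun a ha hg => goodP_mono hmem_s hg)))
            · right
              obtain ⟨s'', hs''p, hs''med, hs''pos⟩ := hbS
              have hl3 : l = (p₁ ++ [u]) ++ s := by rw [hl2]; simp
              have hcnp : c ∉ p₁ ++ [u] := by
                intro hcin
                have hnd3 : ((p₁ ++ [u]) ++ s).Nodup := hl3 ▸ hnd
                exact (List.nodup_append'.mp hnd3).2.2 hcin hcs
              refine ⟨(p₁ ++ [u]) ++ s'', ?_, ?_, ?_⟩
              · exact (hs''p.append_left (p₁ ++ [u])).trans (by rw [← hl3])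
              · exact median_glue (hl3 ▸ hmed) hs''p hs''med
              · rw [hl3, posIn_append_right hcnp, posIn_append_right hcnp]
                omega
          · -- centre not in the suffix: the suffix is a tournament; use `f` as centre
            have hfs : f ∈ s := by simp [hs]
            rcases ih s p₂ f f hlenS hndS hmedS hs hfs
                (fun u' v' hu' hv' hm => by
                  rcases hstar u' v' (hmem_s u' hu') (hmem_s v' hv') hm with h | h
                  · exact absurd (h ▸ hu') hcs
                  · exact absurd (h ▸ hv') hcs)
              with haS | hbS
            · left
              exact hcombine (le_trans haS (cnt_mono_imp (fun a ha hg => goodP_mono hmem_s hg)))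
            · exfalso
              obtain ⟨s'', hs''p, _, hs''pos⟩ := hbS
              have hfnp₂ : f ∉ p₂ := fun h => hfnp (by rw [hpeq]; simp [h])
              have e1 : posIn f s = p₂.length := by
                rw [hs, posIn_append_right hfnp₂, posIn_cons_self]; omega
              have e2 : posIn f s'' < s''.length := posIn_lt_length (hs''p.mem_iff.mpr hfs)
              have e3 : s''.length = s.length := hs''p.length_eq
              have e4 : s.length = p₂.length + 1 := by simp [hs]
              omega
      · -- every bad vertex equals the centre
        push_neg at hd
        have hcp : c ∈ p := by
          have := hd wB hwBp hwBbad
          exact this ▸ hwBp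
        have hcbad : BadP A f l c := by
          have := hd wB hwBp hwBbad
          exact this ▸ hwBbad
        have hcnef : c ≠ f := hcbad.1
        by_cases htight : outw A f p = inw A f p
        · right
          refine ⟨f :: p, ?_, ?_, ?_⟩
          · rw [hsplit]
            have h5 : (p ++ [f]).Perm (f :: (p ++ [])) :=
              List.perm_middle (a := f) (l₁ := p) (l₂ := ([] : List V))
            simpa using h5.symm
          · have := median_front_move (p := p) (u := f) (s := []) (hsplit ▸ hmed) htight
            simpa using this
          · rw [hsplit, posIn_append_left hcp, posIn_cons_ne (fun h => hcnef h.symm)]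
            omega
        · left
          have h1 : outw A f p ≤ inw A f p :=
            median_front_ineq (p := p) (u := f) (s := []) (hsplit ▸ hmed)
          have hstrict : outw A f p + 1 ≤ inw A f p := by omega
          have hndp : p.Nodup := (List.nodup_append.mp (hsplit ▸ hnd)).1
          have in_le : inw A f p ≤ cnt (GoodP A f l) p
              + cnt (fun w => w = c ∧ BadP A f l w) p := by
            apply cnt_split_or
            intro w hw hAwf
            have hwf : w ≠ f := fun h => hfnp (h ▸ hw)
            have hnAfw : ¬ A f w := fun h => hA f w ⟨h, hAwf⟩
            by_cases hg : GoodP A f l w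
            · exact Or.inl hg
            · exact Or.inr ⟨hd w hw ⟨hwf, hnAfw, hg⟩, hwf, hnAfw, hg⟩
          have hone : cnt (fun w => w = c ∧ BadP A f l w) p ≤ 1 := cnt_single hndp
          have h3 : cnt (fun w => A f w) l = outw A f p := by
            rw [hcount]; simp [hff, outw]
          have h4 : cnt (GoodP A f l) p ≤ cnt (GoodP A f l) l := by
            rw [hcount]; omega
          omega

lemma cnt_eq_card_filter (P : V → Prop) : ∀ (l : List V), l.Nodup →
    cnt P l = (l.toFinset.filter P).card := by
  intro l
  induction l with
  | nil => intro _; simp [cnt]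
  | cons a t ih =>
    intro hnd
    have hat : a ∉ t := (List.nodup_cons.mp hnd).1
    rw [List.toFinset_cons, Finset.filter_insert, cnt_cons, ih hnd.of_cons]
    by_cases hp : P a
    · rw [if_pos hp, if_pos hp, Finset.card_insert_of_notMem (by
        simp only [Finset.mem_filter, List.mem_toFinset]
        exact fun h => hat h.1)]
      omega
    · rw [if_neg hp, if_neg hp]; omega


/-- a digraph obtained from a tournament by deleting the edges of
a single star (every missing edge is incident to the center `x`) has a vertex
with the SNP. -/
theorem tournament_minus_star_SNP [Fintype V]
    (A : V → V → Prop) (hA : NoDigons A)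
    (x : V) (hStar : ∀ u v, MissingEdge A u v → u = x ∨ v = x) :
    ∃ v : V, SNP A v := by
    classical
  set l₀ := (Finset.univ : Finset V).toList with hl₀
  have hnd₀ : l₀.Nodup := Finset.nodup_toList _
  have hmem₀ : ∀ y : V, y ∈ l₀ := fun y => by simp [hl₀, Finset.mem_toList]
  have key : ∀ (k : ℕ) (l : List V), l.Perm l₀ → IsMedian A l →
      l₀.length - posIn x l ≤ k → ∃ v, SNP A v := by
    intro k
    induction k with
    | zero =>
      intro l hlp hlmed hk
      have hx : x ∈ l := hlp.mem_iff.mpr (hmem₀ x)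
      have h1 := posIn_lt_length hx
      have h2 := hlp.length_eq
      omega
    | succ k ihk =>
      intro l hlp hlmed hk
      have hx : x ∈ l := hlp.mem_iff.mpr (hmem₀ x)
      have hndl : l.Nodup := (hlp.nodup_iff).mpr hnd₀
      rcases List.eq_nil_or_concat l with hnil | ⟨p, f, hsplit⟩
      · rw [hnil] at hx; simp at hx
      rw [List.concat_eq_append] at hsplit
      rcases lemA hA l.length l p f x le_rfl hndl hlmed hsplit hx
          (fun u v _ _ hm => hStar u v hm) with ha | hb
      · refine ⟨f, ?_⟩
        have hmem : ∀ y : V, y ∈ l := fun y => hlp.mem_iff.mpr (hmem₀ y)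
        have htfin : l.toFinset = Finset.univ := by
          ext y; simp [List.mem_toFinset, hmem y]
        have conv : ∀ P : V → Prop, cnt P l = ({u | P u} : Set V).ncard := by
          intro P
          rw [cnt_eq_card_filter P l hndl, htfin, Set.ncard_eq_toFinset_card']
          congr 1
          ext y
          simp
        have e1 : cnt (fun w => A f w) l = (Nplus A f).ncard := conv _
        have e2 : cnt (GoodP A f l) l = (Npp A f).ncard := by
          have hiff : ∀ a ∈ l, GoodP A f l a ↔ (a ≠ f ∧ ¬ A f a ∧ ∃ y, A f y ∧ A y a) := by
            intro a _
            constructor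
            · rintro ⟨h1, h2, y, _, h3, h4⟩; exact ⟨h1, h2, y, h3, h4⟩
            · rintro ⟨h1, h2, y, h3, h4⟩; exact ⟨h1, h2, y, hmem y, h3, h4⟩
          rw [cnt_congr hiff, conv _]
          rfl
        rw [SNP, ← e1, ← e2]
        exact ha
      · obtain ⟨l', hl'p, hl'med, hpos⟩ := hb
        apply ihk l' (hl'p.trans hlp) hl'med
        have h1 := posIn_lt_length hx
        have h2 := hlp.length_eq
        omega
  obtain ⟨l, hlmem, hmax⟩ := Finset.exists_max_image (l₀.permutations.toFinset) (fwd A)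
    ⟨l₀, List.mem_toFinset.mpr (List.mem_permutations.mpr (List.Perm.refl l₀))⟩
  have hlp : l.Perm l₀ := List.mem_permutations.mp (List.mem_toFinset.mp hlmem)
  have hlmed : IsMedian A l := by
    intro l' hl'
    exact hmax l' (List.mem_toFinset.mpr (List.mem_permutations.mpr (hl'.trans hlp)))
  exact key l₀.length l hlp hlmed (by omega)
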